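/- The binary quartic C4(f) = (a0*a4 - 4*a1*a3 + 3*a2²)*x1⁴ + (2*a0*a5 - 6*a1*a4 + 4*a2*a3)*x1³*x2 + (a0*a6 - 9*a2*a4 + 8*a3²)*x1²*x2² + (2*a1*a6 - 6*a2*a5 + 4*a3*a4)*x1*x2³ + (a2*a6 - 4*a3*a5 + 3*a4²)*x2⁴ is a covariant of binary sextics: for every binary sextic f = Σ_{i=0}^{6} a_i * C(6,i) * x1^{6-i} * x2^i over ℂ and every g in SL(2,ℂ), one has C4(g·f) = g·(C4(f)), where g acts on polynomials in x1, x2 by substitution (g·h)(x1,x2) = h(a*x1 + b*x2, c*x1 + d*x2). -/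

import Mathlib

open MvPolynomial

/-- The action of a 2×2 matrix on polynomials in two variables by substitution:
`(g·h)(x1,x2) = h(a*x1 + b*x2, c*x1 + d*x2)` for `g = (a b; c d)`. -/
noncomputable def matAct (g : Matrix (Fin 2) (Fin 2) ℂ) :
    MvPolynomial (Fin 2) ℂ →ₐ[ℂ] MvPolynomial (Fin 2) ℂ :=
  aeval ![C (g 0 0) * X 0 + C (g 0 1) * X 1, C (g 1 0) * X 0 + C (g 1 1) * X 1]

/-- The binary sextic `f = Σ_{i=0}^{6} a_i * C(6,i) * x1^{6-i} * x2^i`. -/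
noncomputable def sextic (a : Fin 7 → ℂ) : MvPolynomial (Fin 2) ℂ :=
  ∑ i : Fin 7, C (a i * (Nat.choose 6 (i : ℕ) : ℂ)) * X 0 ^ (6 - (i : ℕ)) * X 1 ^ (i : ℕ)

/-- The binary quartic covariant `C4(f)` of a binary sextic with coefficients `a0,…,a6`. -/
noncomputable def quarticCovariant (a : Fin 7 → ℂ) : MvPolynomial (Fin 2) ℂ :=
  C (a 0 * a 4 - 4 * a 1 * a 3 + 3 * a 2 ^ 2) * X 0 ^ 4 +
  C (2 * a 0 * a 5 - 6 * a 1 * a 4 + 4 * a 2 * a 3) * X 0 ^ 3 * X 1 +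
  C (a 0 * a 6 - 9 * a 2 * a 4 + 8 * a 3 ^ 2) * X 0 ^ 2 * X 1 ^ 2 +
  C (2 * a 1 * a 6 - 6 * a 2 * a 5 + 4 * a 3 * a 4) * X 0 * X 1 ^ 3 +
  C (a 2 * a 6 - 4 * a 3 * a 5 + 3 * a 4 ^ 2) * X 1 ^ 4

/-! ### Auxiliary material: the fourth transvectant -/

/-- Half of the fourth transvectant of a polynomial with itself. -/
noncomputable def Tq (p : MvPolynomial (Fin 2) ℂ) : MvPolynomial (Fin 2) ℂ :=
  pderiv 0 (pderiv 0 (pderiv 0 (pderiv 0 p))) * pderiv 1 (pderiv 1 (pderiv 1 (pderiv 1 p)))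
  - 4 * pderiv 0 (pderiv 0 (pderiv 0 (pderiv 1 p))) * pderiv 0 (pderiv 1 (pderiv 1 (pderiv 1 p)))
  + 3 * pderiv 0 (pderiv 0 (pderiv 1 (pderiv 1 p))) ^ 2

lemma pderiv_comm' (i j : Fin 2) (p : MvPolynomial (Fin 2) ℂ) :
    pderiv i (pderiv j p) = pderiv j (pderiv i p) := by
  induction p using MvPolynomial.induction_on' with
  | monomial s c =>
    rcases eq_or_ne i j with rfl | hij
    · rfl
    · simp only [pderiv_monomial]
      rw [tsub_tsub, tsub_tsub, add_comm]
      congr 1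
      rw [Finsupp.tsub_apply, Finsupp.tsub_apply, Finsupp.single_eq_of_ne' hij,
        Finsupp.single_eq_of_ne' (Ne.symm hij)]
      push_cast [Nat.sub_zero]
      ring
  | add p q hp hq => simp [hp, hq]

lemma matAct_pderiv (g : Matrix (Fin 2) (Fin 2) ℂ) (i : Fin 2) (p : MvPolynomial (Fin 2) ℂ) :
    pderiv i (matAct g p) =
      C (g 0 i) * matAct g (pderiv 0 p) + C (g 1 i) * matAct g (pderiv 1 p) := by
  induction p using MvPolynomial.induction_on with
  | C c => simp [matAct]
  | add p q hp hq => simp only [map_add, hp, hq]; ring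
  | mul_X p j hp =>
    simp only [matAct, map_mul, pderiv_mul, aeval_X] at *
    rw [hp]
    fin_cases j <;> fin_cases i <;>
      simp [Matrix.cons_val_zero, Matrix.cons_val_one, pderiv_X_self, pderiv_X_of_ne,
        Fin.zero_eta, Fin.mk_one] <;> ring

lemma Tq_matAct (g : Matrix (Fin 2) (Fin 2) ℂ)
    (hdet : g 0 0 * g 1 1 - g 0 1 * g 1 0 = 1) (p : MvPolynomial (Fin 2) ℂ) :
    Tq (matAct g p) = matAct g (Tq p) := by
  have hdet' : (C (g 0 0) * C (g 1 1) - C (g 0 1) * C (g 1 0) : MvPolynomial (Fin 2) ℂ) = 1 := by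
    rw [← map_mul, ← map_mul, ← map_sub, hdet, map_one]
  have pc : ∀ q : MvPolynomial (Fin 2) ℂ,
      pderiv (1 : Fin 2) (pderiv 0 q) = pderiv 0 (pderiv 1 q) :=
    fun q => pderiv_comm' 1 0 q
  simp only [Tq, matAct_pderiv, map_add, pderiv_C_mul, pc, map_sub, map_mul, map_pow, map_ofNat]
  linear_combination
    (((C (g 0 0) * C (g 1 1) - C (g 0 1) * C (g 1 0) : MvPolynomial (Fin 2) ℂ)^3
      + (C (g 0 0) * C (g 1 1) - C (g 0 1) * C (g 1 0))^2
      + (C (g 0 0) * C (g 1 1) - C (g 0 1) * C (g 1 0)) + 1)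
    * (matAct g (pderiv 0 (pderiv 0 (pderiv 0 (pderiv 0 p))))
        * matAct g (pderiv 1 (pderiv 1 (pderiv 1 (pderiv 1 p))))
      - 4 * matAct g (pderiv 0 (pderiv 0 (pderiv 0 (pderiv 1 p))))
        * matAct g (pderiv 0 (pderiv 1 (pderiv 1 (pderiv 1 p))))
      + 3 * matAct g (pderiv 0 (pderiv 0 (pderiv 1 (pderiv 1 p)))) ^ 2)) * hdet'

lemma sextic_eq (a : Fin 7 → ℂ) : sextic a =
    C (a 0) * X 0 ^ 6 + C (6 * a 1) * (X 0 ^ 5 * X 1) + C (15 * a 2) * (X 0 ^ 4 * X 1 ^ 2) +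
    C (20 * a 3) * (X 0 ^ 3 * X 1 ^ 3) + C (15 * a 4) * (X 0 ^ 2 * X 1 ^ 4) +
    C (6 * a 5) * (X 0 * X 1 ^ 5) + C (a 6) * X 1 ^ 6 := by
  simp only [sextic, Fin.sum_univ_seven, Fin.val_zero, Fin.val_one, Fin.val_two,
    (show ((3:Fin 7):ℕ) = 3 from rfl), (show ((4:Fin 7):ℕ) = 4 from rfl),
    (show ((5:Fin 7):ℕ) = 5 from rfl), (show ((6:Fin 7):ℕ) = 6 from rfl)]
  norm_num [Nat.choose, map_mul, map_ofNat]
  ring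

lemma pderiv_ofNat (i : Fin 2) (n : ℕ) [n.AtLeastTwo] :
    pderiv i (no_index (OfNat.ofNat n) : MvPolynomial (Fin 2) ℂ) = 0 := by
  rw [show (OfNat.ofNat n : MvPolynomial (Fin 2) ℂ) = C (OfNat.ofNat n) from
    (map_ofNat C n).symm, pderiv_C]

lemma pderiv_natCast (i : Fin 2) (n : ℕ) :
    pderiv i ((n : MvPolynomial (Fin 2) ℂ)) = 0 := by
  rw [← map_natCast (C : ℂ →+* MvPolynomial (Fin 2) ℂ) n, pderiv_C]

set_option maxHeartbeats 2000000 in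
lemma s40 (a : Fin 7 → ℂ) : pderiv 0 (pderiv 0 (pderiv 0 (pderiv 0 (sextic a)))) =
    C (360 * a 0) * X 0 ^ 2 + C (720 * a 1) * (X 0 * X 1) + C (360 * a 2) * X 1 ^ 2 := by
  rw [sextic_eq]
  simp only [map_add, pderiv_C_mul, pderiv_mul, pderiv_pow, pderiv_X_self,
    pderiv_X_of_ne (show (0:Fin 2) ≠ 1 by decide),
    pderiv_X_of_ne (show (1:Fin 2) ≠ 0 by decide), pderiv_C, pderiv_one, pderiv_ofNat,
    pderiv_natCast, Nat.cast_ofNat]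
  norm_num [map_ofNat, pderiv_ofNat, pderiv_natCast]
  ring

set_option maxHeartbeats 2000000 in
lemma s31 (a : Fin 7 → ℂ) : pderiv 0 (pderiv 0 (pderiv 0 (pderiv 1 (sextic a)))) =
    C (360 * a 1) * X 0 ^ 2 + C (720 * a 2) * (X 0 * X 1) + C (360 * a 3) * X 1 ^ 2 := by
  rw [sextic_eq]
  simp only [map_add, pderiv_C_mul, pderiv_mul, pderiv_pow, pderiv_X_self,
    pderiv_X_of_ne (show (0:Fin 2) ≠ 1 by decide),
    pderiv_X_of_ne (show (1:Fin 2) ≠ 0 by decide), pderiv_C, pderiv_one, pderiv_ofNat,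
    pderiv_natCast, Nat.cast_ofNat]
  norm_num [map_ofNat, pderiv_ofNat, pderiv_natCast]
  ring

set_option maxHeartbeats 2000000 in
lemma s22 (a : Fin 7 → ℂ) : pderiv 0 (pderiv 0 (pderiv 1 (pderiv 1 (sextic a)))) =
    C (360 * a 2) * X 0 ^ 2 + C (720 * a 3) * (X 0 * X 1) + C (360 * a 4) * X 1 ^ 2 := by
  rw [sextic_eq]
  simp only [map_add, pderiv_C_mul, pderiv_mul, pderiv_pow, pderiv_X_self,
    pderiv_X_of_ne (show (0:Fin 2) ≠ 1 by decide),
    pderiv_X_of_ne (show (1:Fin 2) ≠ 0 by decide), pderiv_C, pderiv_one, pderiv_ofNat,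
    pderiv_natCast, Nat.cast_ofNat]
  norm_num [map_ofNat, pderiv_ofNat, pderiv_natCast]
  ring

set_option maxHeartbeats 2000000 in
lemma s13 (a : Fin 7 → ℂ) : pderiv 0 (pderiv 1 (pderiv 1 (pderiv 1 (sextic a)))) =
    C (360 * a 3) * X 0 ^ 2 + C (720 * a 4) * (X 0 * X 1) + C (360 * a 5) * X 1 ^ 2 := by
  rw [sextic_eq]
  simp only [map_add, pderiv_C_mul, pderiv_mul, pderiv_pow, pderiv_X_self,
    pderiv_X_of_ne (show (0:Fin 2) ≠ 1 by decide),
    pderiv_X_of_ne (show (1:Fin 2) ≠ 0 by decide), pderiv_C, pderiv_one, pderiv_ofNat,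
    pderiv_natCast, Nat.cast_ofNat]
  norm_num [map_ofNat, pderiv_ofNat, pderiv_natCast]
  ring

set_option maxHeartbeats 2000000 in
lemma s04 (a : Fin 7 → ℂ) : pderiv 1 (pderiv 1 (pderiv 1 (pderiv 1 (sextic a)))) =
    C (360 * a 4) * X 0 ^ 2 + C (720 * a 5) * (X 0 * X 1) + C (360 * a 6) * X 1 ^ 2 := by
  rw [sextic_eq]
  simp only [map_add, pderiv_C_mul, pderiv_mul, pderiv_pow, pderiv_X_self,
    pderiv_X_of_ne (show (0:Fin 2) ≠ 1 by decide),
    pderiv_X_of_ne (show (1:Fin 2) ≠ 0 by decide), pderiv_C, pderiv_one, pderiv_ofNat,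
    pderiv_natCast, Nat.cast_ofNat]
  norm_num [map_ofNat, pderiv_ofNat, pderiv_natCast]
  ring

set_option maxHeartbeats 2000000 in
lemma Tq_sextic (a : Fin 7 → ℂ) : Tq (sextic a) = C 129600 * quarticCovariant a := by
  rw [Tq, s40, s04, s31, s13, s22, quarticCovariant]
  simp only [map_sub, map_add, map_mul, map_pow, map_ofNat]
  ring

/-- The binary quartic `C4(f)` is a covariant of binary sextics: for every binary sextic `f`
and every `g ∈ SL(2,ℂ)`, one has `C4(g·f) = g·(C4(f))`. -/
theorem quarticCovariant_is_covariant
    (g : Matrix.SpecialLinearGroup (Fin 2) ℂ) (a a' : Fin 7 → ℂ)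
    (h : matAct (g : Matrix (Fin 2) (Fin 2) ℂ) (sextic a) = sextic a') :
    quarticCovariant a' = matAct (g : Matrix (Fin 2) (Fin 2) ℂ) (quarticCovariant a) := by
  have hdet : (g : Matrix (Fin 2) (Fin 2) ℂ) 0 0 * (g : Matrix (Fin 2) (Fin 2) ℂ) 1 1
      - (g : Matrix (Fin 2) (Fin 2) ℂ) 0 1 * (g : Matrix (Fin 2) (Fin 2) ℂ) 1 0 = 1 := by
    have := g.prop
    rwa [Matrix.det_fin_two] at this
  have h1 : Tq (sextic a') = Tq (matAct (g : Matrix (Fin 2) (Fin 2) ℂ) (sextic a)) := by rw [h]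
  rw [Tq_matAct _ hdet, Tq_sextic, Tq_sextic] at h1
  have h2 : matAct (g : Matrix (Fin 2) (Fin 2) ℂ) (C 129600 * quarticCovariant a)
      = C 129600 * matAct (g : Matrix (Fin 2) (Fin 2) ℂ) (quarticCovariant a) := by
    rw [map_mul]
    congr 1
    simp [matAct]
  rw [h2] at h1
  have hC : (C (129600:ℂ) : MvPolynomial (Fin 2) ℂ) ≠ 0 := by
    simp [MvPolynomial.C_eq_zero]
  exact mul_left_cancel₀ hC h1
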